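/- arXiv:2501.14043 — 2 statements merged into one kernel-verified Lean document; each statement's English description precedes it below -/
import Mathlib

section
/- Let d ≥ 2, let γ⁺, γ⁻ ≥ 0 satisfy γ⁺ + γ⁻ ≥ 1 and γ⁻ − γ⁺ = d − 2, and let u(r) = a·r^{γ⁺} + b·r^{−γ⁻} for real constants a, b. Then for every μ > 1 there is a constant C = C(μ, d) (independent of γ⁺, γ⁻) such that for all R > 0: |a|²·R^{2γ⁺} ≤ C·μ^{−2γ⁺}·R^{−d}·∫_R^{μ³R} |u(r)|²·r^{d−1} dr and |b|²·R^{−2γ⁻} ≤ C·μ^{4γ⁻}·R^{−d}·∫_R^{μ³R} |u(r)|²·r^{d−1} dr. -/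
noncomputable section

open intervalIntegral Real Set MeasureTheory

lemma lin_identity (a b p q : ℝ) :
    (∫ t in p..q, (a*t+b)^2) = a^2*(q^3-p^3)/3 + a*b*(q^2-p^2) + b^2*(q-p) := by
  have h : ∀ t ∈ uIcc p q,
      HasDerivAt (fun t => a^2*t^3/3 + (a*b*t^2 + b^2*t)) ((a*t+b)^2) t := by
    intro t _
    have h1 := (((hasDerivAt_pow 3 t).const_mul (a^2)).div_const 3).add
        (((hasDerivAt_pow 2 t).const_mul (a*b)).add ((hasDerivAt_id' t).const_mul (b^2)))
    refine h1.congr_deriv ?_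
    push_cast; ring
  rw [integral_eq_sub_of_hasDerivAt h
    ((by fun_prop : Continuous fun t : ℝ => (a*t+b)^2).intervalIntegrable p q)]
  ring

lemma lin_lower_a {a b p q : ℝ} (h : p ≤ q) :
    a^2*(q-p)^3/12 ≤ ∫ t in p..q, (a*t+b)^2 := by
  rw [lin_identity]
  nlinarith [mul_nonneg (sub_nonneg.2 h) (sq_nonneg (2*b + a*(p+q))), sq_nonneg (q-p)]

lemma lin_lower_b {a b p q : ℝ} (h0 : 0 < p) (h : p ≤ q) :
    b^2*(q-p)^3/(4*(q^2+q*p+p^2)) ≤ ∫ t in p..q, (a*t+b)^2 := by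
  rw [lin_identity]
  rw [div_le_iff₀ (by nlinarith)]
  rcases eq_or_lt_of_le h with rfl | hlt
  · norm_num
  have key : (q-p)*((a^2*(q^3-p^3)/3 + a*b*(q^2-p^2) + b^2*(q-p)) * (4*(q^2+q*p+p^2))
      - b^2*(q-p)^3) = 3*(2*((q^3-p^3)/3)*a + (q^2-p^2)*b)^2 := by ring
  have hX : 0 ≤ (a^2*(q^3-p^3)/3 + a*b*(q^2-p^2) + b^2*(q-p)) * (4*(q^2+q*p+p^2))
      - b^2*(q-p)^3 := by
    by_contra hneg
    push_neg at hneg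
    nlinarith [mul_pos (sub_pos.2 hlt) (neg_pos.2 hneg), key,
      sq_nonneg (2*((q^3-p^3)/3)*a + (q^2-p^2)*b)]
  linarith

lemma subst_eq (a b γp γm s e D R S : ℝ) (hR : 0 < R) (hRS : R ≤ S)
    (hs1 : 1 ≤ s) (hγ : γp = s - γm) (hD : D = 2*γm + 1 - s) (hse : s * e = 2 - 2*s) :
    (∫ r in R..S, (a * r ^ γp + b * r ^ (-γm)) ^ 2 * r ^ D)
      = ∫ t in (R^s)..(S^s), (a*t+b)^2 * (max t (R^s))^e / s := by
  have hs0 : (0:ℝ) < s := lt_of_lt_of_le one_pos hs1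
  have hp0 : 0 < R ^ s := Real.rpow_pos_of_pos hR s
  have hgc : Continuous fun t : ℝ => (a*t+b)^2 * (max t (R^s))^e / s := by
    have hmax : Continuous fun t : ℝ => (max t (R^s))^e := by
      apply Continuous.rpow_const (continuous_id.max continuous_const)
      intro t; exact Or.inl (ne_of_gt (lt_of_lt_of_le hp0 (le_max_right t (R^s))))
    fun_prop
  have h1 : ∀ x ∈ uIcc R S, HasDerivAt (fun x : ℝ => x ^ s) (s * x ^ (s-1)) x := fun x _ =>
    Real.hasDerivAt_rpow_const (Or.inr hs1)
  have h2 : ContinuousOn (fun x : ℝ => s * x ^ (s-1)) (uIcc R S) := by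
    apply continuousOn_const.mul
    apply ContinuousOn.rpow_const continuousOn_id
    intro x hx
    rw [uIcc_of_le hRS] at hx
    exact Or.inl (ne_of_gt (lt_of_lt_of_le hR hx.1))
  have h3 := integral_comp_smul_deriv h1 h2 hgc
  rw [← h3]
  apply integral_congr
  intro x hx
  rw [uIcc_of_le hRS] at hx
  have hx0 : 0 < x := lt_of_lt_of_le hR hx.1
  have hxp : R ^ s ≤ x ^ s := Real.rpow_le_rpow hR.le hx.1 hs0.le
  simp only [Function.comp, smul_eq_mul]
  rw [max_eq_left hxp]
  have e1 : a * x ^ γp + b * x ^ (-γm) = (a * x ^ s + b) * x ^ (-γm) := by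
    have e2 : x ^ s * x ^ (-γm) = x ^ γp := by
      rw [← Real.rpow_add hx0]; congr 1; rw [hγ]; ring
    rw [← e2]; ring
  have e3 : (x ^ (-γm))^2 = x ^ (-(2*γm)) := by
    rw [← Real.rpow_natCast (x ^ (-γm)) 2, ← Real.rpow_mul hx0.le]
    norm_num; ring_nf
  have e4 : (x ^ s) ^ e = x ^ (2 - 2*s) := by
    rw [← Real.rpow_mul hx0.le, hse]
  rw [e1, mul_pow, e3, e4]
  rw [mul_assoc, ← Real.rpow_add hx0]
  rw [show -(2*γm) + D = (s-1) + (2-2*s) by rw [hD]; ring, Real.rpow_add hx0]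
  field_simp

set_option maxHeartbeats 1000000 in
/-- For `u(r) = a r^{γ⁺} + b r^{−γ⁻}` with `γ⁺,γ⁻ ≥ 0`, `γ⁺+γ⁻ ≥ 1`,
`γ⁻−γ⁺ = d−2`, and any `μ > 1`, there is `C = C(μ,d)` (uniform in `γ⁺,γ⁻,a,b,R`) with
`|a|² R^{2γ⁺} ≤ C μ^{−2γ⁺} R^{−d} ∫_R^{μ³R} u² r^{d−1} dr` and
`|b|² R^{−2γ⁻} ≤ C μ^{4γ⁻} R^{−d} ∫_R^{μ³R} u² r^{d−1} dr`. -/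
theorem stmt1 (d : ℕ) (hd : 2 ≤ d) (μ : ℝ) (hμ : 1 < μ) :
    ∃ C > 0, ∀ a b γp γm : ℝ, 0 ≤ γp → 0 ≤ γm → 1 ≤ γp + γm → γm - γp = (d : ℝ) - 2 →
      ∀ R : ℝ, 0 < R →
        a ^ 2 * R ^ (2 * γp)
            ≤ C * μ ^ (-(2 * γp)) * R ^ (-(d : ℝ)) *
              ∫ r in R..(μ ^ 3 * R), (a * r ^ γp + b * r ^ (-γm)) ^ 2 * r ^ ((d : ℝ) - 1) ∧
        b ^ 2 * R ^ (-(2 * γm))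
            ≤ C * μ ^ (4 * γm) * R ^ (-(d : ℝ)) *
              ∫ r in R..(μ ^ 3 * R), (a * r ^ γp + b * r ^ (-γm)) ^ 2 * r ^ ((d : ℝ) - 1) := by
  have hμ0 : (0:ℝ) < μ := lt_trans one_pos hμ
  set M : ℝ := μ^3 with hMdef
  have hM1 : 1 < M := by
    have := one_lt_pow₀ hμ (n := 3) (by norm_num)
    simpa [hMdef] using this
  have hM0 : (0:ℝ) < M := lt_trans one_pos hM1
  have hlog : 0 < Real.log μ := Real.log_pos hμ
  have hMinv : 0 < 1 - M⁻¹ := by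
    rw [sub_pos]; exact inv_lt_one_of_one_lt₀ hM1
  set κa : ℝ := Real.log μ * μ^(6:ℝ) * (1 - M⁻¹)^3 / 6 with hκa
  set κb : ℝ := Real.log μ * (M-1)^3 / (2 * M^2 * (M^2+M+1)) with hκb
  have hκa0 : 0 < κa := by
    have h6 : 0 < μ^(6:ℝ) := Real.rpow_pos_of_pos hμ0 _
    rw [hκa]; positivity
  have hκb0 : 0 < κb := by
    have hM1' : 0 < M - 1 := sub_pos.2 hM1
    rw [hκb]; positivity
  clear_value M κa κb
  refine ⟨κa⁻¹ + κb⁻¹, by positivity, ?_⟩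
  intro a b γp γm hγp hγm hs1 hγ R hR
  set s := γp + γm with hsdef
  set S : ℝ := M * R with hSdef
  set p : ℝ := R ^ s with hpdef
  set q : ℝ := S ^ s with hqdef
  set e : ℝ := 2/s - 2 with hedef
  clear_value s S p q e
  have hs0 : (0:ℝ) < s := lt_of_lt_of_le one_pos hs1
  have hd2 : (2:ℝ) ≤ (d:ℝ) := by exact_mod_cast hd
  have hγpm : γp ≤ γm := by linarith only [hγ, hd2]
  have hRS : R ≤ S := by
    rw [hSdef]
    calc R = 1*R := (one_mul R).symm
      _ ≤ M*R := mul_le_mul_of_nonneg_right hM1.le hR.le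
  have hp0 : 0 < p := by rw [hpdef]; exact Real.rpow_pos_of_pos hR s
  have hS0 : 0 < S := by rw [hSdef]; positivity
  have hq0 : 0 < q := by rw [hqdef]; exact Real.rpow_pos_of_pos hS0 s
  have hpq : p ≤ q := by
    rw [hpdef, hqdef]; exact Real.rpow_le_rpow hR.le hRS hs0.le
  have he0 : e ≤ 0 := by
    rw [hedef, sub_nonpos, div_le_iff₀ hs0]; linarith
  have he2 : (-2:ℝ) ≤ e := by
    have : 0 < 2/s := by positivity
    rw [hedef]; linarith
  have hse : s * e = 2 - 2*s := by
    rw [hedef]; field_simp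
  set g : ℝ → ℝ := fun t => (a*t+b)^2 * (max t p)^e / s with hgdef
  have hgc : Continuous g := by
    rw [hgdef]
    have hmax : Continuous fun t : ℝ => (max t p)^e := by
      apply Continuous.rpow_const (continuous_id.max continuous_const)
      intro t; exact Or.inl (ne_of_gt (lt_of_lt_of_le hp0 (le_max_right t p)))
    fun_prop
  have hgnn : ∀ t, 0 ≤ g t := by
    intro t
    rw [hgdef]
    have h1 : (0:ℝ) ≤ (max t p)^e := Real.rpow_nonneg (le_trans hp0.le (le_max_right t p)) e
    exact div_nonneg (mul_nonneg (sq_nonneg _) h1) hs0.le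
  clear_value g
  have hsub : (∫ r in R..S, (a * r ^ γp + b * r ^ (-γm)) ^ 2 * r ^ ((d:ℝ) - 1))
      = ∫ t in p..q, g t := by
    rw [hgdef]
    simp only []
    rw [hpdef, hqdef]
    exact subst_eq a b γp γm s e ((d:ℝ)-1) R S hR hRS hs1 (by rw [hsdef]; ring)
      (by rw [hsdef]; linarith only [hγ]) hse
  have hJnn : 0 ≤ ∫ t in p..q, g t :=
    intervalIntegral.integral_nonneg hpq (fun t _ => hgnn t)
  have hRs2 : (0:ℝ) ≤ R^(s+2) := Real.rpow_nonneg hR.le _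
  have hqMp : q = M^s * p := by
    rw [hqdef, hSdef, Real.mul_rpow hM0.le hR.le, hpdef]
  have hMs1 : (1:ℝ) ≤ M^(s-1) := Real.one_le_rpow hM1.le (by linarith)
  have f1 : q * (1 - M⁻¹) ≤ q - p := by
    have hMsM : M^s * M⁻¹ = M^(s-1) := by
      rw [Real.rpow_sub hM0, Real.rpow_one, div_eq_mul_inv]
    have h1 : p ≤ q * M⁻¹ := by
      rw [hqMp]
      calc p = 1 * p := (one_mul p).symm
        _ ≤ M^(s-1) * p := mul_le_mul_of_nonneg_right hMs1 hp0.le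
        _ = M^s * M⁻¹ * p := by rw [hMsM]
        _ = M^s * p * M⁻¹ := by ring
    have h2 : q*(1-M⁻¹) = q - q*M⁻¹ := by ring
    linarith only [h1, h2]
  have f5 : 2*s*Real.log μ ≤ μ^(2*s) := by
    have h := Real.add_one_le_exp (2*s*Real.log μ)
    rw [Real.rpow_def_of_pos hμ0]
    calc 2*s*Real.log μ ≤ 2*s*Real.log μ + 1 := by linarith
      _ ≤ Real.exp (2*s*Real.log μ) := h
      _ = Real.exp (Real.log μ * (2*s)) := by ring_nf
  have hqe0 : (0:ℝ) < q^e := Real.rpow_pos_of_pos hq0 e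
  -- Bound A
  have hA0 : (q^e/s) * ∫ t in p..q, (a*t+b)^2 ≤ ∫ t in p..q, g t := by
    rw [← intervalIntegral.integral_const_mul]
    apply intervalIntegral.integral_mono_on hpq
      ((by fun_prop : Continuous fun t : ℝ => q^e/s * (a*t+b)^2).intervalIntegrable p q)
      (hgc.intervalIntegrable p q)
    intro t ht
    have hmaxpos : 0 < max t p := lt_of_lt_of_le hp0 (le_max_right t p)
    have h1 : q^e ≤ (max t p)^e :=
      Real.rpow_le_rpow_of_nonpos hmaxpos (max_le ht.2 hpq) he0
    have h2 : (a*t+b)^2*(q^e) ≤ (a*t+b)^2*((max t p)^e) :=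
      mul_le_mul_of_nonneg_left h1 (sq_nonneg _)
    rw [hgdef]
    show q^e/s * (a*t+b)^2 ≤ (a*t+b)^2 * (max t p)^e / s
    rw [div_mul_eq_mul_div, mul_comm (q^e)]
    exact div_le_div_of_nonneg_right h2 hs0.le
  have hJA : q^e/s * (a^2*(q-p)^3/12) ≤ ∫ t in p..q, g t :=
    le_trans (mul_le_mul_of_nonneg_left (lin_lower_a hpq)
      (div_nonneg hqe0.le hs0.le)) hA0
  have f3 : q^e * (q*(1-M⁻¹))^3 = M^(s+2) * R^(s+2) * (1-M⁻¹)^3 := by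
    have h1 : q^e * q^((3:ℕ):ℝ) = M^(s+2)*R^(s+2) := by
      rw [← Real.rpow_add hq0, hqdef, hSdef, ← Real.rpow_mul (mul_pos hM0 hR).le]
      rw [show s*(e+((3:ℕ):ℝ)) = s*e + 3*s from by push_cast; ring, hse,
        show 2 - 2*s + 3*s = s + 2 from by ring]
      rw [Real.mul_rpow hM0.le hR.le]
    rw [Real.rpow_natCast q 3] at h1
    calc q^e * (q*(1-M⁻¹))^3 = q^e*q^3*(1-M⁻¹)^3 := by ring
      _ = _ := by rw [h1]
  have f4 : μ^(2*γp) * μ^(2*s) * μ^(6:ℝ) ≤ M^(s+2) := by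
    have hM' : M^(s+2) = μ^((3:ℝ)*(s+2)) := by
      rw [hMdef, Real.rpow_mul hμ0.le, show ((3:ℝ)) = ((3:ℕ):ℝ) by norm_num,
        Real.rpow_natCast]
    rw [hM', ← Real.rpow_add hμ0, ← Real.rpow_add hμ0]
    apply Real.rpow_le_rpow_of_exponent_le hμ.le
    have h2γp : 2*γp ≤ s := by rw [hsdef]; linarith only [hγpm]
    linarith only [h2γp]
  have hA : a^2 * (μ^(2*γp) * R^(s+2)) * κa ≤ ∫ t in p..q, g t := by
    refine le_trans ?_ hJA
    have f2 : q^e*(q*(1-M⁻¹))^3 ≤ q^e*(q-p)^3 :=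
      mul_le_mul_of_nonneg_left
        (pow_le_pow_left₀ (mul_nonneg hq0.le hMinv.le) f1 3) hqe0.le
    have g1 : μ^(2*γp) * (2*s*Real.log μ) * μ^(6:ℝ) ≤ M^(s+2) := by
      refine le_trans ?_ f4
      have h6 : (0:ℝ) ≤ μ^(6:ℝ) := (Real.rpow_pos_of_pos hμ0 _).le
      have h7 : (0:ℝ) ≤ μ^(2*γp) := (Real.rpow_pos_of_pos hμ0 _).le
      exact mul_le_mul_of_nonneg_right (mul_le_mul_of_nonneg_left f5 h7) h6
    calc a^2 * (μ^(2*γp)*R^(s+2)) * κa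
        = (μ^(2*γp) * (2*s*Real.log μ) * μ^(6:ℝ)) * R^(s+2) * ((1-M⁻¹)^3 * a^2) / (12*s) := by
          rw [hκa]; field_simp; ring
      _ ≤ M^(s+2) * R^(s+2) * ((1-M⁻¹)^3 * a^2) / (12*s) := by
          apply div_le_div_of_nonneg_right _ (by linarith : (0:ℝ) ≤ 12*s)
          exact mul_le_mul_of_nonneg_right (mul_le_mul_of_nonneg_right g1 hRs2)
            (mul_nonneg (by positivity) (sq_nonneg a))
      _ = q^e * (q*(1-M⁻¹))^3 * a^2 / (12*s) := by rw [f3]; ring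
      _ ≤ q^e * (q-p)^3 * a^2 / (12*s) := by
          apply div_le_div_of_nonneg_right _ (by linarith : (0:ℝ) ≤ 12*s)
          exact mul_le_mul_of_nonneg_right f2 (sq_nonneg a)
      _ = q^e/s * (a^2*(q-p)^3/12) := by ring
  -- Bound B
  set w : ℝ := M * p with hwdef
  clear_value w
  have hpw : p ≤ w := by rw [hwdef]; exact le_mul_of_one_le_left hp0.le hM1.le
  have hwq : w ≤ q := by
    rw [hwdef, hqMp]
    have h1 : M^(1:ℝ) ≤ M^s := Real.rpow_le_rpow_of_exponent_le hM1.le hs1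
    rw [Real.rpow_one] at h1
    exact mul_le_mul_of_nonneg_right h1 hp0.le
  have hB00 : ∫ t in p..w, g t ≤ ∫ t in p..q, g t :=
    intervalIntegral.integral_mono_interval le_rfl hpw hwq
      (Filter.Eventually.of_forall fun t => hgnn t) (hgc.intervalIntegrable p q)
  have hpe0 : (0:ℝ) < p^e := Real.rpow_pos_of_pos hp0 e
  have hMm2 : (0:ℝ) < M^(-2:ℝ) := Real.rpow_pos_of_pos hM0 _
  have hB1 : (M^(-2:ℝ)*p^e/s) * ∫ t in p..w, (a*t+b)^2 ≤ ∫ t in p..w, g t := by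
    rw [← intervalIntegral.integral_const_mul]
    apply intervalIntegral.integral_mono_on hpw
      ((by fun_prop : Continuous fun t : ℝ => M^(-2:ℝ)*p^e/s * (a*t+b)^2).intervalIntegrable p w)
      (hgc.intervalIntegrable p w)
    intro t ht
    have hmaxpos : 0 < max t p := lt_of_lt_of_le hp0 (le_max_right t p)
    have hw0 : 0 < w := lt_of_lt_of_le hp0 hpw
    have h1 : w^e ≤ (max t p)^e :=
      Real.rpow_le_rpow_of_nonpos hmaxpos (max_le ht.2 hpw) he0
    have h2 : M^(-2:ℝ)*p^e ≤ w^e := by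
      rw [hwdef, Real.mul_rpow hM0.le hp0.le]
      exact mul_le_mul_of_nonneg_right
        (Real.rpow_le_rpow_of_exponent_le hM1.le he2) (Real.rpow_nonneg hp0.le e)
    have h3 : (a*t+b)^2*(M^(-2:ℝ)*p^e) ≤ (a*t+b)^2*((max t p)^e) :=
      mul_le_mul_of_nonneg_left (le_trans h2 h1) (sq_nonneg _)
    rw [hgdef]
    show M^(-2:ℝ)*p^e/s * (a*t+b)^2 ≤ (a*t+b)^2 * (max t p)^e / s
    rw [div_mul_eq_mul_div, mul_comm (M^(-2:ℝ)*p^e)]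
    exact div_le_div_of_nonneg_right h3 hs0.le
  have hJB : (M^(-2:ℝ)*p^e/s) * (b^2*(w-p)^3/(4*(w^2+w*p+p^2))) ≤ ∫ t in p..q, g t :=
    le_trans (mul_le_mul_of_nonneg_left (lin_lower_b hp0 hpw)
      (div_nonneg (mul_nonneg hMm2.le hpe0.le) hs0.le)) (le_trans hB1 hB00)
  have h4M : (0:ℝ) < 4*(M^2+M+1) := by linarith only [sq_nonneg M, hM0]
  have hM13 : (0:ℝ) ≤ (M-1)^3 := pow_nonneg (by linarith) 3
  have hwp3 : b^2*(w-p)^3/(4*(w^2+w*p+p^2)) = b^2*p*(M-1)^3/(4*(M^2+M+1)) := by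
    rw [hwdef]
    rw [show (M*p-p)^3 = p^3*(M-1)^3 from by ring,
      show 4*((M*p)^2+(M*p)*p+p^2) = p^2*(4*(M^2+M+1)) from by ring]
    rw [div_eq_div_iff (by positivity) (by positivity)]
    ring
  have hpe1 : p^e * p = R^(2-s) := by
    rw [hpdef, ← Real.rpow_mul hR.le, ← Real.rpow_add hR]
    congr 1
    have : s*e = 2-2*s := hse
    linarith
  have f6 : μ^(-(2*s)) * (2*Real.log μ) ≤ 1/s := by
    have hpos : 0 < μ^(2*s) := Real.rpow_pos_of_pos hμ0 _
    rw [Real.rpow_neg hμ0.le, inv_mul_le_iff₀ hpos, mul_one_div, le_div_iff₀ hs0]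
    linarith only [f5]
  have f7 : μ^(-(4*γm)) ≤ μ^(-(2*s)) :=
    Real.rpow_le_rpow_of_exponent_le hμ.le
      (by have : 2*s ≤ 4*γm := by rw [hsdef]; linarith only [hγpm]
          linarith only [this])
  have hB : b^2 * (μ^(-(4*γm)) * R^(2-s)) * κb ≤ ∫ t in p..q, g t := by
    refine le_trans ?_ hJB
    rw [hwp3]
    have hR2s : (0:ℝ) ≤ R^(2-s) := Real.rpow_nonneg hR.le _
    have hMm2e : M^(-2:ℝ) = (M^2)⁻¹ := by
      rw [Real.rpow_neg hM0.le, show ((2:ℝ)) = ((2:ℕ):ℝ) by norm_num, Real.rpow_natCast]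
    rw [hMm2e]
    calc b^2 * (μ^(-(4*γm)) * R^(2-s)) * κb
        ≤ b^2 * (μ^(-(2*s)) * R^(2-s)) * κb := by
          apply mul_le_mul_of_nonneg_right _ hκb0.le
          exact mul_le_mul_of_nonneg_left
            (mul_le_mul_of_nonneg_right f7 hR2s) (sq_nonneg b)
      _ = (μ^(-(2*s)) * (2*Real.log μ)) * (R^(2-s) * ((M^2)⁻¹ * (b^2*(M-1)^3/(4*(M^2+M+1))))) := by
          rw [hκb]; field_simp; ring
      _ ≤ (1/s) * (R^(2-s) * ((M^2)⁻¹ * (b^2*(M-1)^3/(4*(M^2+M+1))))) := by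
          apply mul_le_mul_of_nonneg_right f6
          have hinv : (0:ℝ) ≤ (M^2)⁻¹ := inv_nonneg.2 (sq_nonneg M)
          exact mul_nonneg hR2s (mul_nonneg hinv
            (div_nonneg (mul_nonneg (sq_nonneg b) hM13) h4M.le))
      _ = ((M^2)⁻¹*(p^e)/s) * (b^2*p*(M-1)^3/(4*(M^2+M+1))) := by
          rw [← hpe1]; ring
  -- final assembly
  have hμ2γp : μ ^ (-(2*γp)) * μ ^ (2*γp) = 1 := by
    rw [← Real.rpow_add hμ0]; norm_num
  have hμ4γm : μ ^ (4*γm) * μ ^ (-(4*γm)) = 1 := by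
    rw [← Real.rpow_add hμ0]; norm_num
  have hRd1 : R ^ (-(d:ℝ)) * R^(s+2) = R^(2*γp) := by
    rw [← Real.rpow_add hR]; congr 1; rw [hsdef]; linarith only [hγ]
  have hRd2 : R ^ (-(d:ℝ)) * R^(2-s) = R^(-(2*γm)) := by
    rw [← Real.rpow_add hR]; congr 1; rw [hsdef]; linarith only [hγ]
  rw [hsub]
  have hCnn : (0:ℝ) ≤ κa⁻¹ + κb⁻¹ := by positivity
  constructor
  · have h2 : a^2 * (μ^(2*γp) * R^(s+2)) ≤ κa⁻¹ * ∫ t in p..q, g t := by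
      rw [le_inv_mul_iff₀ hκa0]
      linarith only [hA]
    have h1 : a^2 * (μ^(2*γp) * R^(s+2)) ≤ (κa⁻¹ + κb⁻¹) * ∫ t in p..q, g t := by
      refine le_trans h2 ?_
      apply mul_le_mul_of_nonneg_right _ hJnn
      have h := inv_pos.2 hκb0
      linarith only [h]
    calc a^2 * R^(2*γp) = μ^(-(2*γp)) * R^(-(d:ℝ)) * (a^2 * (μ^(2*γp) * R^(s+2))) := by
          rw [show μ^(-(2*γp)) * R^(-(d:ℝ)) * (a^2 * (μ^(2*γp) * R^(s+2)))
             = a^2 * ((μ^(-(2*γp)) * μ^(2*γp)) * (R^(-(d:ℝ)) * R^(s+2))) from by ring,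
             hμ2γp, hRd1, one_mul]
      _ ≤ μ^(-(2*γp)) * R^(-(d:ℝ)) * ((κa⁻¹+κb⁻¹) * ∫ t in p..q, g t) :=
          mul_le_mul_of_nonneg_left h1
            (mul_nonneg (Real.rpow_nonneg hμ0.le _) (Real.rpow_nonneg hR.le _))
      _ = (κa⁻¹+κb⁻¹) * μ^(-(2*γp)) * R^(-(d:ℝ)) * (∫ t in p..q, g t) := by ring
  · have h2 : b^2 * (μ^(-(4*γm)) * R^(2-s)) ≤ κb⁻¹ * ∫ t in p..q, g t := by
      rw [le_inv_mul_iff₀ hκb0]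
      linarith only [hB]
    have h1 : b^2 * (μ^(-(4*γm)) * R^(2-s)) ≤ (κa⁻¹ + κb⁻¹) * ∫ t in p..q, g t := by
      refine le_trans h2 ?_
      apply mul_le_mul_of_nonneg_right _ hJnn
      have h := inv_pos.2 hκa0
      linarith only [h]
    calc b^2 * R^(-(2*γm)) = μ^(4*γm) * R^(-(d:ℝ)) * (b^2 * (μ^(-(4*γm)) * R^(2-s))) := by
          rw [show μ^(4*γm) * R^(-(d:ℝ)) * (b^2 * (μ^(-(4*γm)) * R^(2-s)))
             = b^2 * ((μ^(4*γm) * μ^(-(4*γm))) * (R^(-(d:ℝ)) * R^(2-s))) from by ring,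
             hμ4γm, hRd2, one_mul]
      _ ≤ μ^(4*γm) * R^(-(d:ℝ)) * ((κa⁻¹+κb⁻¹) * ∫ t in p..q, g t) :=
          mul_le_mul_of_nonneg_left h1
            (mul_nonneg (Real.rpow_nonneg hμ0.le _) (Real.rpow_nonneg hR.le _))
      _ = (κa⁻¹+κb⁻¹) * μ^(4*γm) * R^(-(d:ℝ)) * (∫ t in p..q, g t) := by ring
end
end

section
/- Let u_ρ, u : ℝ³ \ B_1 → ℝ³ be maps with asymptotic expansions u_ρ(x) = n_ρ + v_ρ/|x| + w_ρ(x) and u(x) = n + v/|x| + w(x), where n_ρ, n, v_ρ, v ∈ ℝ³ are constants and the remainders satisfy |∇w(x)| ≤ K·ln³|x|/|x|³ and |∇w_ρ(x)| ≤ K·(ln³|x|/|x|³ + √ρ/|x|) on λ₀ ≤ |x| ≤ Λ. Then for every λ with λ₀ ≤ λ and 2λ ≤ Λ: |v_ρ − v|²/λ ≤ C·( ∫_{B_{2λ}\B_λ} |∇u_ρ − ∇u|² dx + ln⁶(2λ)/λ³ + λ·ρ ), with C depending only on K. -/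
noncomputable section

open MeasureTheory Metric

abbrev E3 : Type := EuclideanSpace ℝ (Fin 3)

lemma hasFDerivAt_invnorm_smul (c : E3) {x : E3} (hx : x ≠ 0) :
    HasFDerivAt (fun y : E3 => ‖y‖⁻¹ • c)
      (((-(‖x‖ ^ 3)⁻¹ • (innerSL ℝ x)) : E3 →L[ℝ] ℝ).smulRight c) x := by
  have h0 : (0:ℝ) < ‖x‖ := norm_pos_iff.mpr hx
  have hq : HasFDerivAt (fun y : E3 => ‖y‖ ^ 2) ((2:ℕ) • innerSL ℝ x) x :=
    (hasStrictFDerivAt_norm_sq x).hasFDerivAt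
  have hsq : Real.sqrt (‖x‖ ^ 2) = ‖x‖ := Real.sqrt_sq h0.le
  have hs : HasDerivAt (fun t : ℝ => (Real.sqrt t)⁻¹)
      (-(1 / (2 * Real.sqrt (‖x‖ ^ 2))) / Real.sqrt (‖x‖ ^ 2) ^ 2) (‖x‖ ^ 2) :=
    (Real.hasDerivAt_sqrt (by positivity)).inv (by rw [hsq]; exact h0.ne')
  have hcomp := (hs.comp_hasFDerivAt x hq).smul_const c
  have heq : (fun y : E3 => ((fun t => (Real.sqrt t)⁻¹) ∘ fun y : E3 => ‖y‖ ^ 2) y • c) = fun y : E3 => ‖y‖⁻¹ • c := by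
    funext y; simp only [Function.comp]; rw [Real.sqrt_sq (norm_nonneg y)]
  rw [heq] at hcomp
  refine hcomp.congr_fderiv (Eq.symm ?_)
  refine ContinuousLinearMap.ext fun h => ?_
  simp only [ContinuousLinearMap.smulRight_apply, ContinuousLinearMap.smul_apply,
    ContinuousLinearMap.coe_smul', Pi.smul_apply, smul_eq_mul, hsq]
  congr 1
  rw [nsmul_eq_mul]
  push_cast
  field_simp

/-- The operator `D c x = ((-(‖x‖^3)⁻¹) • innerSL ℝ x).smulRight c` has norm `‖c‖/‖x‖²`. -/
lemma norm_Dc {x : E3} (hx : x ≠ 0) (c : E3) :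
    ‖(((-(‖x‖ ^ 3)⁻¹ • (innerSL ℝ x)) : E3 →L[ℝ] ℝ).smulRight c)‖ = ‖c‖ / ‖x‖ ^ 2 := by
  have h0 : (0:ℝ) < ‖x‖ := norm_pos_iff.mpr hx
  rw [ContinuousLinearMap.norm_smulRight_apply, norm_smul, innerSL_apply_norm]
  rw [Real.norm_eq_abs, abs_neg, abs_inv, abs_pow, abs_norm]
  field_simp

lemma norm_Dc_lower {x : E3} (hx : x ≠ 0) (c : E3) :
    ‖c‖ / ‖x‖ ^ 2 ≤ ‖(((-(‖x‖ ^ 3)⁻¹ • (innerSL ℝ x)) : E3 →L[ℝ] ℝ).smulRight c)‖ :=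
  (norm_Dc hx c).ge

set_option maxHeartbeats 2000000 in
/-- let `u_ρ, u : ℝ³ \ B_1 → ℝ³` have the far-field expansions
`u_ρ = n_ρ + v_ρ/|x| + w_ρ` and `u = n + v/|x| + w` with remainder gradient bounds
`|∇w| ≤ K ln³|x|/|x|³` and `|∇w_ρ| ≤ K (ln³|x|/|x|³ + √ρ/|x|)` on `λ₀ ≤ |x| ≤ Λ`.
Then for every `λ` with `λ₀ ≤ λ`, `2λ ≤ Λ`:
`|v_ρ − v|²/λ ≤ C ( ∫_{B_{2λ}\B_λ} |∇u_ρ − ∇u|² + ln⁶(2λ)/λ³ + λρ )`,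
with `C` depending only on `K`. -/
theorem stmt19 (K : ℝ) (hK : 0 ≤ K) :
    ∃ C > 0, ∀ (ρ lam₀ Λ : ℝ) (uρ u wρ w : E3 → E3) (nρ n vρ v : E3),
      0 < ρ → 1 ≤ lam₀ →
      (∀ x : E3, lam₀ ≤ ‖x‖ → ‖x‖ ≤ Λ →
        (uρ x = nρ + ‖x‖⁻¹ • vρ + wρ x ∧
          u x = n + ‖x‖⁻¹ • v + w x ∧
          DifferentiableAt ℝ uρ x ∧ DifferentiableAt ℝ u x ∧
          DifferentiableAt ℝ wρ x ∧ DifferentiableAt ℝ w x ∧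
          ‖fderiv ℝ w x‖ ≤ K * Real.log ‖x‖ ^ 3 / ‖x‖ ^ 3 ∧
          ‖fderiv ℝ wρ x‖
            ≤ K * (Real.log ‖x‖ ^ 3 / ‖x‖ ^ 3 + Real.sqrt ρ / ‖x‖))) →
      ∀ lam : ℝ, lam₀ ≤ lam → 2 * lam ≤ Λ →
        ‖vρ - v‖ ^ 2 / lam
          ≤ C * ((∫ x in {x : E3 | lam ≤ ‖x‖ ∧ ‖x‖ ≤ 2 * lam},
                ‖fderiv ℝ uρ x - fderiv ℝ u x‖ ^ 2)
              + Real.log (2 * lam) ^ 6 / lam ^ 3 + lam * ρ) := by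
  set V : ℝ := (volume (ball (0:E3) 1)).toReal with hVdef
  have hVpos : 0 < V :=
    ENNReal.toReal_pos (measure_ball_pos volume (0:E3) one_pos).ne' measure_ball_lt_top.ne
  refine ⟨32 / (7 * V) + 320 * K ^ 2 + 1, by positivity, ?_⟩
  intro ρ lam₀ Λ uρ u wρ w nρ n vρ v hρ hlam₀ hyp lam hlam hΛ
  set c : E3 := vρ - v with hc
  have hlam1 : (1:ℝ) ≤ lam := hlam₀.trans hlam
  have hlampos : (0:ℝ) < lam := lt_of_lt_of_le one_pos hlam1
  have hlog0 : 0 ≤ Real.log (2 * lam) := Real.log_nonneg (by linarith)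
  set L3 : ℝ := Real.log (2 * lam) ^ 3 with hL3
  have hL3nn : 0 ≤ L3 := pow_nonneg hlog0 3
  set B : ℝ := 2 * L3 / lam ^ 3 + Real.sqrt ρ / lam with hB
  have hBnn : 0 ≤ B := by positivity
  set A : Set E3 := ball (0:E3) (2 * lam) \ closedBall (0:E3) lam with hA
  set S : Set E3 := {x : E3 | lam ≤ ‖x‖ ∧ ‖x‖ ≤ 2 * lam} with hS
  have hAopen : IsOpen A := isOpen_ball.sdiff isClosed_closedBall
  have hAmem : ∀ x ∈ A, lam < ‖x‖ ∧ ‖x‖ < 2 * lam := by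
    intro x hxA
    obtain ⟨h1, h2⟩ := hxA
    rw [mem_ball_zero_iff] at h1
    rw [mem_closedBall_zero_iff] at h2
    exact ⟨not_le.mp h2, h1⟩
  set F : E3 → ℝ := fun x => ‖fderiv ℝ uρ x - fderiv ℝ u x‖ ^ 2 with hF
  -- key pointwise estimates on A
  have hkey : ∀ x ∈ A, ‖c‖ / (4 * lam ^ 2) ≤ ‖fderiv ℝ uρ x - fderiv ℝ u x‖ + K * B ∧
      ‖fderiv ℝ uρ x - fderiv ℝ u x‖ ≤ ‖c‖ / lam ^ 2 + K * B := by
    intro x hxA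
    obtain ⟨hxlo, hxhi⟩ := hAmem x hxA
    have hx0 : (0:ℝ) < ‖x‖ := lt_trans hlampos hxlo
    have hxne : x ≠ 0 := norm_pos_iff.mp hx0
    have hx1 : (1:ℝ) ≤ ‖x‖ := by linarith
    obtain ⟨_, _, _, _, hwρd, hwd, hwb, hwρb⟩ :=
      hyp x (le_trans hlam hxlo.le) (by linarith)
    -- fderiv of uρ on A
    have hfd : ∀ (f g : E3 → E3) (nn vv : E3), DifferentiableAt ℝ g x →
        (∀ y ∈ A, f y = nn + ‖y‖⁻¹ • vv + g y) →
        fderiv ℝ f x = ((-(‖x‖ ^ 3)⁻¹ • (innerSL ℝ x)) : E3 →L[ℝ] ℝ).smulRight vv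
          + fderiv ℝ g x := by
      intro f g nn vv hgd hfy
      have hev : f =ᶠ[nhds x] fun y => nn + ‖y‖⁻¹ • vv + g y :=
        Filter.eventually_of_mem (hAopen.mem_nhds hxA) hfy
      have hder : HasFDerivAt (fun y : E3 => nn + ‖y‖⁻¹ • vv + g y)
          ((0 + ((-(‖x‖ ^ 3)⁻¹ • (innerSL ℝ x)) : E3 →L[ℝ] ℝ).smulRight vv)
            + fderiv ℝ g x) x :=
        ((hasFDerivAt_const nn x).add (hasFDerivAt_invnorm_smul vv hxne)).add
          hgd.hasFDerivAt
      have := (hder.congr_of_eventuallyEq hev).fderiv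
      rw [this, zero_add]
    have huρf := hfd uρ wρ nρ vρ hwρd (fun y hy => by
      obtain ⟨h1, h2⟩ := hAmem y hy
      exact (hyp y (le_trans hlam h1.le) (by linarith)).1)
    have huf := hfd u w n v hwd (fun y hy => by
      obtain ⟨h1, h2⟩ := hAmem y hy
      exact (hyp y (le_trans hlam h1.le) (by linarith)).2.1)
    -- difference formula
    have hdiff : fderiv ℝ uρ x - fderiv ℝ u x =
        ((-(‖x‖ ^ 3)⁻¹ • (innerSL ℝ x)) : E3 →L[ℝ] ℝ).smulRight c
          + (fderiv ℝ wρ x - fderiv ℝ w x) := by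
      rw [huρf, huf]
      refine ContinuousLinearMap.ext fun h => ?_
      simp only [ContinuousLinearMap.add_apply, ContinuousLinearMap.sub_apply,
        ContinuousLinearMap.smulRight_apply, hc, smul_sub]
      abel
    -- remainder bounds
    have hlogx : Real.log ‖x‖ ≤ Real.log (2 * lam) := Real.log_le_log hx0 (by linarith)
    have hlogxnn : 0 ≤ Real.log ‖x‖ := Real.log_nonneg hx1
    have hl3 : Real.log ‖x‖ ^ 3 / ‖x‖ ^ 3 ≤ L3 / lam ^ 3 := by
      apply div_le_div₀ (by positivity) (pow_le_pow_left₀ hlogxnn hlogx 3) (by positivity)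
      exact pow_le_pow_left₀ hlampos.le hxlo.le 3
    have hsr : Real.sqrt ρ / ‖x‖ ≤ Real.sqrt ρ / lam :=
      div_le_div_of_nonneg_left (Real.sqrt_nonneg ρ) hlampos hxlo.le
    have hrem : ‖fderiv ℝ wρ x‖ + ‖fderiv ℝ w x‖ ≤ K * B := by
      have h1 : ‖fderiv ℝ w x‖ ≤ K * (L3 / lam ^ 3) := by
        refine hwb.trans ?_
        rw [mul_div_assoc]
        exact mul_le_mul_of_nonneg_left hl3 hK
      have h2 : ‖fderiv ℝ wρ x‖ ≤ K * (L3 / lam ^ 3 + Real.sqrt ρ / lam) :=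
        hwρb.trans (mul_le_mul_of_nonneg_left (add_le_add hl3 hsr) hK)
      have : B = (L3 / lam ^ 3 + Real.sqrt ρ / lam) + L3 / lam ^ 3 := by
        rw [hB]; ring
      rw [this, mul_add]
      exact add_le_add h2 h1
    -- norm of the Dc part
    have hDclow : ‖c‖ / (4 * lam ^ 2)
        ≤ ‖(((-(‖x‖ ^ 3)⁻¹ • (innerSL ℝ x)) : E3 →L[ℝ] ℝ).smulRight c)‖ := by
      refine le_trans ?_ (norm_Dc_lower hxne c)
      apply div_le_div_of_nonneg_left (norm_nonneg c) (pow_pos hx0 2)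
      nlinarith [hxhi, hx0]
    have hDchigh : ‖(((-(‖x‖ ^ 3)⁻¹ • (innerSL ℝ x)) : E3 →L[ℝ] ℝ).smulRight c)‖
        ≤ ‖c‖ / lam ^ 2 := by
      rw [norm_Dc hxne c]
      exact div_le_div_of_nonneg_left (norm_nonneg c) (pow_pos hlampos 2)
        (by nlinarith [hxlo, hlampos])
    constructor
    · calc ‖c‖ / (4 * lam ^ 2)
          ≤ ‖(((-(‖x‖ ^ 3)⁻¹ • (innerSL ℝ x)) : E3 →L[ℝ] ℝ).smulRight c)‖ := hDclow
        _ ≤ ‖fderiv ℝ uρ x - fderiv ℝ u x‖ + ‖fderiv ℝ wρ x - fderiv ℝ w x‖ := by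
            have : (((-(‖x‖ ^ 3)⁻¹ • (innerSL ℝ x)) : E3 →L[ℝ] ℝ).smulRight c)
                = (fderiv ℝ uρ x - fderiv ℝ u x) - (fderiv ℝ wρ x - fderiv ℝ w x) := by
              rw [hdiff]; abel
            rw [this]
            exact norm_sub_le _ _
        _ ≤ ‖fderiv ℝ uρ x - fderiv ℝ u x‖ + K * B := by
            refine add_le_add le_rfl (le_trans (norm_sub_le _ _) hrem)
    · calc ‖fderiv ℝ uρ x - fderiv ℝ u x‖
          ≤ ‖(((-(‖x‖ ^ 3)⁻¹ • (innerSL ℝ x)) : E3 →L[ℝ] ℝ).smulRight c)‖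
              + ‖fderiv ℝ wρ x - fderiv ℝ w x‖ := by
            rw [hdiff]; exact norm_add_le _ _
        _ ≤ ‖c‖ / lam ^ 2 + K * B :=
            add_le_add hDchigh (le_trans (norm_sub_le _ _) hrem)
  -- S =ᵐ A
  have hSA : S =ᵐ[volume] A := by
    have hAS : A ⊆ S := fun x hx => ⟨(hAmem x hx).1.le, (hAmem x hx).2.le⟩
    have hSsub : S \ A ⊆ sphere (0:E3) lam ∪ sphere (0:E3) (2 * lam) := by
      intro x hx
      obtain ⟨⟨h1, h2⟩, h3⟩ := hx
      simp only [hA, Set.mem_diff, mem_ball_zero_iff, mem_closedBall_zero_iff, not_and,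
        not_not, not_lt] at h3
      rcases lt_or_eq_of_le h2 with h2' | h2'
      · have := h3 h2'
        left; rw [mem_sphere_zero_iff_norm]; linarith
      · right; rw [mem_sphere_zero_iff_norm]; exact h2'
    have h0 : volume (S \ A) = 0 := by
      refine measure_mono_null hSsub ?_
      rw [measure_union_null_iff]
      exact ⟨Measure.addHaar_sphere volume _ _, Measure.addHaar_sphere volume _ _⟩
    have h0' : volume (A \ S) = 0 := by
      rw [Set.diff_eq_empty.mpr hAS]; exact measure_empty
    exact (MeasureTheory.ae_eq_set.mpr ⟨h0, h0'⟩)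
  have hIeq : (∫ x in S, F x) = ∫ x in A, F x := setIntegral_congr_set hSA
  -- measurability / integrability
  have hFmeas : AEStronglyMeasurable F volume := by
    refine Measurable.aestronglyMeasurable ?_
    exact (((measurable_fderiv ℝ uρ).sub (measurable_fderiv ℝ u)).norm.pow_const 2)
  have hAmeas : MeasurableSet A := hAopen.measurableSet
  have hAfin : volume A ≠ ⊤ := by
    refine (lt_of_le_of_lt (measure_mono Set.diff_subset) measure_ball_lt_top).ne
  have hFint : IntegrableOn F A := by
    refine Measure.integrableOn_of_bounded (M := (‖c‖ / lam ^ 2 + K * B) ^ 2) hAfin hFmeas ?_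
    rw [ae_restrict_iff' hAmeas]
    refine Filter.Eventually.of_forall fun x hx => ?_
    have := (hkey x hx).2
    rw [Real.norm_eq_abs, abs_of_nonneg (by positivity)]
    exact pow_le_pow_left₀ (norm_nonneg _) this 2
  -- integral inequality
  have hptwise : ∀ x ∈ A, ‖c‖ ^ 2 / (16 * lam ^ 4) ≤ 2 * F x + 2 * (K * B) ^ 2 := by
    intro x hx
    have h1 := (hkey x hx).1
    have h2 : (‖c‖ / (4 * lam ^ 2)) ^ 2 ≤ (‖fderiv ℝ uρ x - fderiv ℝ u x‖ + K * B) ^ 2 :=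
      pow_le_pow_left₀ (by positivity) h1 2
    have h3 : (‖fderiv ℝ uρ x - fderiv ℝ u x‖ + K * B) ^ 2
        ≤ 2 * F x + 2 * (K * B) ^ 2 := by
      have hFx : F x = ‖fderiv ℝ uρ x - fderiv ℝ u x‖ ^ 2 := rfl
      rw [hFx]; nlinarith [sq_nonneg (‖fderiv ℝ uρ x - fderiv ℝ u x‖ - K * B)]
    calc ‖c‖ ^ 2 / (16 * lam ^ 4) = (‖c‖ / (4 * lam ^ 2)) ^ 2 := by
          rw [div_pow]; ring_nf
      _ ≤ _ := le_trans h2 h3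
  have hint : (volume A).toReal * (‖c‖ ^ 2 / (16 * lam ^ 4))
      ≤ 2 * (∫ x in A, F x) + (volume A).toReal * (2 * (K * B) ^ 2) := by
    have h1 : (∫ _x in A, (‖c‖ ^ 2 / (16 * lam ^ 4))) ≤ ∫ x in A, (2 * F x + 2 * (K * B) ^ 2) := by
      refine setIntegral_mono_on (integrableOn_const hAfin)
        (((hFint.const_mul 2).add (integrableOn_const hAfin))) hAmeas hptwise
    rw [setIntegral_const, smul_eq_mul] at h1
    rw [integral_add (hFint.const_mul 2) (integrableOn_const hAfin),
      integral_const_mul, setIntegral_const, smul_eq_mul] at h1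
    rw [Measure.real] at h1
    linarith
  -- measure of A
  have hvolA : (volume A).toReal = 7 * lam ^ 3 * V := by
    have hsub : closedBall (0:E3) lam ⊆ ball (0:E3) (2 * lam) :=
      closedBall_subset_ball (by linarith)
    have hd : volume A = volume (ball (0:E3) (2 * lam)) - volume (closedBall (0:E3) lam) :=
      measure_diff hsub measurableSet_closedBall.nullMeasurableSet
        measure_closedBall_lt_top.ne
    have hb2 : volume (ball (0:E3) (2 * lam))
        = ENNReal.ofReal ((2 * lam) ^ 3) * volume (ball (0:E3) 1) := by
      rw [Measure.addHaar_ball volume _ (by positivity : (0:ℝ) ≤ 2 * lam)]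
      norm_num [finrank_euclideanSpace_fin]
    have hb1 : volume (closedBall (0:E3) lam)
        = ENNReal.ofReal (lam ^ 3) * volume (ball (0:E3) 1) := by
      rw [Measure.addHaar_closedBall volume _ hlampos.le]
      norm_num [finrank_euclideanSpace_fin]
    have hle : volume (closedBall (0:E3) lam) ≤ volume (ball (0:E3) (2 * lam)) :=
      measure_mono hsub
    rw [hd, hb2, hb1]
    rw [hb2, hb1] at hle
    rw [ENNReal.toReal_sub_of_le hle
      (ENNReal.mul_ne_top ENNReal.ofReal_ne_top measure_ball_lt_top.ne)]
    rw [ENNReal.toReal_mul, ENNReal.toReal_mul, ENNReal.toReal_ofReal (by positivity),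
      ENNReal.toReal_ofReal (by positivity)]
    rw [← hVdef]
    ring
  -- final arithmetic
  set I : ℝ := ∫ x in S, F x with hI
  have hInn : 0 ≤ I := by
    rw [hIeq]
    exact setIntegral_nonneg hAmeas fun x _ => sq_nonneg _
  rw [hvolA, ← hIeq] at hint
  have hVne : V ≠ 0 := hVpos.ne'
  have hlamne : lam ≠ 0 := hlampos.ne'
  have hmul := mul_le_mul_of_nonneg_left hint
    (le_of_lt (by positivity : (0:ℝ) < 16 / (7 * V)))
  have e1 : 16 / (7 * V) * (7 * lam ^ 3 * V * (‖c‖ ^ 2 / (16 * lam ^ 4)))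
      = ‖c‖ ^ 2 / lam := by field_simp
  have e2 : 16 / (7 * V) * (2 * I + 7 * lam ^ 3 * V * (2 * (K * B) ^ 2))
      = 32 / (7 * V) * I + 32 * K ^ 2 * (lam ^ 3 * B ^ 2) := by field_simp; ring
  rw [e1, e2] at hmul
  -- bound lam^3 * B^2
  have hsqρ : Real.sqrt ρ ^ 2 = ρ := Real.sq_sqrt hρ.le
  have hB2 : lam ^ 3 * B ^ 2
      ≤ 8 * (Real.log (2 * lam) ^ 6 / lam ^ 3) + 2 * (lam * ρ) := by
    have h1 : B ^ 2 ≤ 2 * (2 * L3 / lam ^ 3) ^ 2 + 2 * (Real.sqrt ρ / lam) ^ 2 := by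
      rw [hB]; nlinarith [sq_nonneg (2 * L3 / lam ^ 3 - Real.sqrt ρ / lam)]
    have h2 : lam ^ 3 * B ^ 2
        ≤ lam ^ 3 * (2 * (2 * L3 / lam ^ 3) ^ 2 + 2 * (Real.sqrt ρ / lam) ^ 2) :=
      mul_le_mul_of_nonneg_left h1 (by positivity)
    refine h2.trans (le_of_eq ?_)
    rw [hL3]
    field_simp
    rw [hsqρ]; ring
  have hterm2 : 32 * K ^ 2 * (lam ^ 3 * B ^ 2)
      ≤ 256 * K ^ 2 * (Real.log (2 * lam) ^ 6 / lam ^ 3) + 64 * K ^ 2 * (lam * ρ) := by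
    have := mul_le_mul_of_nonneg_left hB2 (by positivity : (0:ℝ) ≤ 32 * K ^ 2)
    nlinarith [this]
  have hmain : ‖c‖ ^ 2 / lam ≤ 32 / (7 * V) * I
      + 256 * K ^ 2 * (Real.log (2 * lam) ^ 6 / lam ^ 3) + 64 * K ^ 2 * (lam * ρ) := by
    linarith
  have hLnn : 0 ≤ Real.log (2 * lam) ^ 6 / lam ^ 3 := by positivity
  have hPnn : 0 ≤ lam * ρ := by positivity
  have hann : 0 ≤ 32 / (7 * V) := by positivity
  have hK2 : 0 ≤ K ^ 2 := sq_nonneg K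
  nlinarith [hmain, mul_nonneg hK2 hInn, mul_nonneg hann hLnn, mul_nonneg hK2 hLnn,
    mul_nonneg hann hPnn, mul_nonneg hK2 hPnn, hInn, hLnn, hPnn]
end
end
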